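/- Let ℓ : ℝ^{d×d} → ℝ be a real-analytic loss, and consider gradient flow on a depth-L factorization (L ≥ 2) by square matrices W_l : [0,∞) → ℝ^{d×d} with balanced initialization. Then the determinant of the product matrix W_{L:1}(t) has the same sign as its initial value for all t ≥ 0: det(W_{L:1}(t)) is identically zero if det(W_{L:1}(0)) = 0, is positive for all t if det(W_{L:1}(0)) > 0, and is negative for all t if det(W_{L:1}(0)) < 0. -/

import Mathlib

open Matrix

/-- The prefix product `W_{l−1}(t)⋯W_0(t)` of the first `l` factors (identity for `l = 0`). -/
noncomputable def prodUpTo (d : ℕ) (W : ℕ → ℝ → Matrix (Fin d) (Fin d) ℝ) (l : ℕ)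
    (t : ℝ) : Matrix (Fin d) (Fin d) ℝ :=
  (((List.range l).map fun i => W i t).reverse).prod

/-- The suffix product `W_{L−1}(t)⋯W_l(t)` of the last `L − l` factors (identity for `l = L`). -/
noncomputable def prodFrom (d L : ℕ) (W : ℕ → ℝ → Matrix (Fin d) (Fin d) ℝ) (l : ℕ)
    (t : ℝ) : Matrix (Fin d) (Fin d) ℝ :=
  (((List.range (L - l)).map fun i => W (l + i) t).reverse).prod

namespace DetSign

variable {d : ℕ} (W : ℕ → ℝ → Matrix (Fin d) (Fin d) ℝ)

lemma prodUpTo_zero (t : ℝ) : prodUpTo d W 0 t = 1 := rfl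

lemma prodUpTo_succ (n : ℕ) (t : ℝ) : prodUpTo d W (n+1) t = W n t * prodUpTo d W n t := by
  unfold prodUpTo
  rw [List.range_succ, List.map_append, List.reverse_append]
  simp

lemma prodFrom_self (L l : ℕ) (h : L ≤ l) (t : ℝ) : prodFrom d L W l t = 1 := by
  unfold prodFrom
  rw [Nat.sub_eq_zero_of_le h]
  rfl

lemma prodFrom_top (n j : ℕ) (h : j ≤ n) (t : ℝ) :
    prodFrom d (n+1) W j t = W n t * prodFrom d n W j t := by
  unfold prodFrom
  have h1 : n + 1 - j = (n - j) + 1 := by omega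
  have h2 : j + (n - j) = n := by omega
  rw [h1, List.range_succ, List.map_append, List.reverse_append]
  simp [h2]

lemma prodFrom_bot (L l : ℕ) (h : l < L) (t : ℝ) :
    prodFrom d L W l t = prodFrom d L W (l+1) t * W l t := by
  unfold prodFrom
  have h1 : L - l = (L - (l+1)) + 1 := by omega
  rw [h1, List.range_succ_eq_map]
  simp only [List.map_cons, List.map_map, List.reverse_cons, List.prod_append,
    List.prod_cons, List.prod_nil, List.prod_concat, add_zero, mul_one]
  have h2 : ((fun i => W (l + i) t) ∘ Nat.succ) = (fun i => W (l + 1 + i) t) := by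
    funext i
    have h3 : l + (i+1) = l + 1 + i := by omega
    show W (l + (i+1)) t = W (l + 1 + i) t
    rw [h3]
  rw [h2]

lemma split (L : ℕ) (t : ℝ) :
    ∀ l, l ≤ L → prodUpTo d W L t = prodFrom d L W l t * prodUpTo d W l t := by
  intro l hl
  induction l with
  | zero =>
    rw [prodUpTo_zero, mul_one]
    unfold prodUpTo prodFrom
    simp
  | succ n ih =>
    rw [ih (by omega), prodFrom_bot W L n (by omega), mul_assoc, ← prodUpTo_succ]

lemma split3 (L : ℕ) (t : ℝ) (l : ℕ) (hl : l < L) :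
    prodUpTo d W L t = prodFrom d L W (l+1) t * (W l t * prodUpTo d W l t) := by
  rw [split W L t l (le_of_lt hl), prodFrom_bot W L l hl, mul_assoc]



variable {d : ℕ}

/-- entrywise derivative of a matrix curve -/
def HD (M : ℝ → Matrix (Fin d) (Fin d) ℝ) (M' : Matrix (Fin d) (Fin d) ℝ) (t : ℝ) : Prop :=
  ∀ i j, HasDerivAt (fun s => M s i j) (M' i j) t

lemma HD.const (B : Matrix (Fin d) (Fin d) ℝ) (t : ℝ) : HD (fun _ => B) 0 t := by
  intro i j
  simpa using hasDerivAt_const t (B i j)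

lemma HD.mul {M N : ℝ → Matrix (Fin d) (Fin d) ℝ} {M' N' : Matrix (Fin d) (Fin d) ℝ} {t : ℝ}
    (hM : HD M M' t) (hN : HD N N' t) :
    HD (fun s => M s * N s) (M' * N t + M t * N') t := by
  intro i j
  have h : ∀ k ∈ Finset.univ, HasDerivAt (fun s => M s i k * N s k j)
      (M' i k * N t k j + M t i k * N' k j) t := fun k _ => (hM i k).mul (hN k j)
  simpa [Matrix.mul_apply, Matrix.add_apply, Finset.sum_add_distrib] using HasDerivAt.fun_sum h

lemma HD.transpose {M : ℝ → Matrix (Fin d) (Fin d) ℝ} {M' : Matrix (Fin d) (Fin d) ℝ} {t : ℝ}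
    (hM : HD M M' t) : HD (fun s => (M s)ᵀ) M'ᵀ t := fun i j => hM j i

lemma HD.sub {M N : ℝ → Matrix (Fin d) (Fin d) ℝ} {M' N' : Matrix (Fin d) (Fin d) ℝ} {t : ℝ}
    (hM : HD M M' t) (hN : HD N N' t) : HD (fun s => M s - N s) (M' - N') t := by
  intro i j
  simpa [Matrix.sub_apply] using (hM i j).fun_sub (hN i j)

lemma HD.congr_fun {M N : ℝ → Matrix (Fin d) (Fin d) ℝ} {M' : Matrix (Fin d) (Fin d) ℝ} {t : ℝ}
    (hM : HD M M' t) (h : ∀ s, M s = N s) : HD N M' t := by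
  have : M = N := funext h
  rwa [← this]

lemma HD.congr_deriv {M : ℝ → Matrix (Fin d) (Fin d) ℝ} {M' N' : Matrix (Fin d) (Fin d) ℝ} {t : ℝ}
    (hM : HD M M' t) (h : M' = N') : HD M N' t := h ▸ hM

/-- determinant is zero if we update a row to zero -/
private lemma det_updateRow_finset_sum (N : Matrix (Fin d) (Fin d) ℝ) (i : Fin d)
    (s : Finset (Fin d)) (v : Fin d → (Fin d → ℝ)) :
    (N.updateRow i (∑ k ∈ s, v k)).det = ∑ k ∈ s, (N.updateRow i (v k)).det := by
  classical
  induction s using Finset.induction with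
  | empty =>
    simp only [Finset.sum_empty]
    exact Matrix.det_eq_zero_of_row_eq_zero i (fun j => by simp)
  | insert _ _ hk ih =>
    rw [Finset.sum_insert hk, Matrix.det_updateRow_add, ih, Finset.sum_insert hk]

lemma det_updateRow_eq_sum (N : Matrix (Fin d) (Fin d) ℝ) (i : Fin d) (v : Fin d → ℝ) :
    (N.updateRow i v).det = ∑ k, v k * N.adjugate k i := by
  have hrow : v = ∑ k, v k • (Pi.single k (1:ℝ) : Fin d → ℝ) := by
    funext j
    simp [Pi.single_apply]
  conv_lhs => rw [hrow]
  rw [det_updateRow_finset_sum]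
  refine Finset.sum_congr rfl fun k _ => ?_
  rw [Matrix.det_updateRow_smul, Matrix.adjugate_apply]

lemma sum_det_updateRow_eq_trace (N B : Matrix (Fin d) (Fin d) ℝ) :
    ∑ i, (N.updateRow i (B i)).det = Matrix.trace (N.adjugate * B) := by
  simp only [det_updateRow_eq_sum, Matrix.trace, Matrix.diag, Matrix.mul_apply]
  rw [Finset.sum_comm]
  refine Finset.sum_congr rfl fun k _ => Finset.sum_congr rfl fun i _ => mul_comm _ _



lemma jacobi_sum (N B : Matrix (Fin d) (Fin d) ℝ) :
    ∑ σ : Equiv.Perm (Fin d), ((Equiv.Perm.sign σ : ℤ) : ℝ) *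
        ∑ i, (∏ j ∈ Finset.univ.erase i, N (σ j) j) * B (σ i) i
      = ∑ i, (N.updateRow i (B i)).det := by
  simp only [Matrix.det_apply']
  rw [Finset.sum_comm]
  refine Finset.sum_congr rfl fun σ _ => ?_
  rw [Finset.mul_sum]
  refine Fintype.sum_equiv σ _ _ fun i => ?_
  have h1 : (Matrix.updateRow N (σ i) (B (σ i))) (σ i) i = B (σ i) i := by
    rw [Matrix.updateRow_self]
  have h2 : ∀ j ∈ Finset.univ.erase i, (Matrix.updateRow N (σ i) (B (σ i))) (σ j) j = N (σ j) j := by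
    intro j hj
    rw [Matrix.updateRow_ne]
    exact fun h => (Finset.mem_erase.mp hj).1 (σ.injective h)
  rw [← Finset.mul_prod_erase Finset.univ _ (Finset.mem_univ i), h1, Finset.prod_congr rfl h2]
  ring

lemma HD.det {M : ℝ → Matrix (Fin d) (Fin d) ℝ} {M' : Matrix (Fin d) (Fin d) ℝ} {t : ℝ}
    (h : HD M M' t) :
    HasDerivAt (fun s => (M s).det) (Matrix.trace ((M t).adjugate * M')) t := by
  have hle : HasDerivAt (fun s => (M s).det)
      (∑ σ : Equiv.Perm (Fin d), ((Equiv.Perm.sign σ : ℤ) : ℝ) *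
        ∑ i, (∏ j ∈ Finset.univ.erase i, M t (σ j) j) * M' (σ i) i) t := by
    simp only [Matrix.det_apply']
    refine HasDerivAt.fun_sum fun σ _ => ?_
    have hp := HasDerivAt.fun_finsetProd (u := Finset.univ) (fun i _ => h (σ i) i)
    simpa [smul_eq_mul] using hp.const_mul (((Equiv.Perm.sign σ : ℤ) : ℝ))
  rw [← sum_det_updateRow_eq_trace, ← jacobi_sum]
  exact hle



variable {d : ℕ}

lemma grad_eq_fderiv
    (ℓ : Matrix (Fin d) (Fin d) ℝ → ℝ)
    (hanalytic : ∀ v : Fin d → Fin d → ℝ,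
      AnalyticAt ℝ (fun u : Fin d → Fin d → ℝ => ℓ (Matrix.of u)) v)
    (G : Matrix (Fin d) (Fin d) ℝ → Matrix (Fin d) (Fin d) ℝ)
    (hG : ∀ X H : Matrix (Fin d) (Fin d) ℝ,
      HasDerivAt (fun s : ℝ => ℓ (X + s • H)) (∑ i, ∑ j, G X i j * H i j) 0) :
    ∃ g : (Fin d → Fin d → ℝ) → Matrix (Fin d) (Fin d) ℝ,
      Continuous g ∧ ∀ X : Matrix (Fin d) (Fin d) ℝ, G X = g (Matrix.of.symm X) := by
  classical
  set ℓp : (Fin d → Fin d → ℝ) → ℝ := fun u => ℓ (Matrix.of u) with hℓp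
  have hcd : ContDiff ℝ 1 ℓp := by
    have : AnalyticOnNhd ℝ ℓp Set.univ := fun x _ => hanalytic x
    exact this.contDiff
  refine ⟨fun v => Matrix.of fun i j =>
      fderiv ℝ ℓp v (Matrix.of.symm (Matrix.single i j (1:ℝ))), ?_, ?_⟩
  · refine continuous_matrix fun i j => ?_
    exact (hcd.continuous_fderiv one_ne_zero).clm_apply continuous_const
  · intro X
    ext i j
    set E := Matrix.single i j (1:ℝ) with hE
    have hbasis : HasDerivAt (fun s : ℝ => ℓ (X + s • E)) (G X i j) 0 := by
      have h := hG X E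
      have hsum : (∑ a, ∑ b, G X a b * E a b) = G X i j := by
        simp [hE, Matrix.single, ite_and, mul_ite, Finset.sum_ite_eq,
          Finset.sum_ite_eq']
      rwa [hsum] at h
    have hcurve : HasDerivAt
        (fun s : ℝ => (Matrix.of.symm X + s • Matrix.of.symm E : Fin d → Fin d → ℝ))
        (Matrix.of.symm E) 0 := by
      simpa using ((hasDerivAt_id (0:ℝ)).smul_const (Matrix.of.symm E)).const_add
        (Matrix.of.symm X)
    have hdiff : DifferentiableAt ℝ ℓp (Matrix.of.symm X + (0:ℝ) • Matrix.of.symm E) :=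
      (hanalytic _).differentiableAt
    have h2 := hdiff.hasFDerivAt.comp_hasDerivAt 0 hcurve
    simp only [zero_smul, add_zero] at h2
    have h2' : HasDerivAt (fun s : ℝ => ℓ (X + s • E))
        (fderiv ℝ ℓp (Matrix.of.symm X) (Matrix.of.symm E)) 0 := h2
    exact hbasis.unique h2'



noncomputable def Vl (d L : ℕ) (G : Matrix (Fin d) (Fin d) ℝ → Matrix (Fin d) (Fin d) ℝ)
    (W : ℕ → ℝ → Matrix (Fin d) (Fin d) ℝ) (l : ℕ) (t : ℝ) : Matrix (Fin d) (Fin d) ℝ :=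
  -((prodFrom d L W (l + 1) t)ᵀ * G (prodUpTo d W L t) * (prodUpTo d W l t)ᵀ)

noncomputable def DA (d L : ℕ) (G : Matrix (Fin d) (Fin d) ℝ → Matrix (Fin d) (Fin d) ℝ)
    (W : ℕ → ℝ → Matrix (Fin d) (Fin d) ℝ) (t : ℝ) : Matrix (Fin d) (Fin d) ℝ :=
  ∑ l ∈ Finset.range L, prodFrom d L W (l + 1) t * Vl d L G W l t * prodUpTo d W l t

section Main
variable {L : ℕ} {G : Matrix (Fin d) (Fin d) ℝ → Matrix (Fin d) (Fin d) ℝ}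
  {W : ℕ → ℝ → Matrix (Fin d) (Fin d) ℝ}

lemma HD_prodUpTo (hGF' : ∀ l, l < L → ∀ t : ℝ, 0 ≤ t → HD (W l) (Vl d L G W l t) t)
    (t : ℝ) (ht : 0 ≤ t) :
    ∀ n, n ≤ L → HD (fun s => prodUpTo d W n s)
      (∑ l ∈ Finset.range n, prodFrom d n W (l + 1) t * Vl d L G W l t * prodUpTo d W l t) t := by
  intro n
  induction n with
  | zero =>
    intro _
    refine ((HD.const (1 : Matrix (Fin d) (Fin d) ℝ) t).congr_fun
      (fun s => (prodUpTo_zero W s).symm)).congr_deriv ?_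
    simp
  | succ n ih =>
    intro hn
    have h1 := (hGF' n (by omega) t ht).mul (ih (by omega))
    have h2 := h1.congr_fun (fun s => (prodUpTo_succ W n s).symm)
    refine h2.congr_deriv ?_
    rw [Finset.sum_range_succ, prodFrom_self W (n+1) (n+1) le_rfl t, one_mul, add_comm]
    congr 1
    rw [Finset.mul_sum]
    refine Finset.sum_congr rfl fun l hl => ?_
    rw [prodFrom_top W n (l+1) (by have := Finset.mem_range.mp hl; omega) t,
      mul_assoc, mul_assoc, mul_assoc]

lemma balance_all
    (hGF' : ∀ l, l < L → ∀ t : ℝ, 0 ≤ t → HD (W l) (Vl d L G W l t) t)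
    (hbal : ∀ l, l + 1 < L → (W (l + 1) 0)ᵀ * W (l + 1) 0 = W l 0 * (W l 0)ᵀ)
    (t : ℝ) (ht : 0 ≤ t) (l : ℕ) (hl : l + 1 < L) :
    (W (l + 1) t)ᵀ * W (l + 1) t = W l t * (W l t)ᵀ := by
  have key : ∀ s, 0 ≤ s →
      HD (fun τ => (W (l+1) τ)ᵀ * W (l+1) τ - W l τ * (W l τ)ᵀ) 0 s := by
    intro s hs
    have hWl := hGF' l (by omega) s hs
    have hWl1 := hGF' (l+1) hl s hs
    have hd := (hWl1.transpose.mul hWl1).sub (hWl.mul hWl.transpose)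
    refine hd.congr_deriv ?_
    have hkey : (W (l+1) s)ᵀ * Vl d L G W (l+1) s = Vl d L G W l s * (W l s)ᵀ := by
      unfold Vl
      rw [prodFrom_bot W L (l+1) hl s, prodUpTo_succ W l s]
      simp [Matrix.transpose_mul, Matrix.mul_assoc]
    have hkeyT : (Vl d L G W (l+1) s)ᵀ * W (l+1) s = W l s * (Vl d L G W l s)ᵀ := by
      have h := congrArg Matrix.transpose hkey
      simpa [Matrix.transpose_mul, Matrix.transpose_transpose] using h
    rw [hkey, hkeyT]
    abel
  have hsub : ∀ i j,
      ((W (l+1) t)ᵀ * W (l+1) t - W l t * (W l t)ᵀ) i j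
        = ((W (l+1) 0)ᵀ * W (l+1) 0 - W l 0 * (W l 0)ᵀ) i j := by
    intro i j
    have hcont : ContinuousOn
        (fun τ => ((W (l+1) τ)ᵀ * W (l+1) τ - W l τ * (W l τ)ᵀ) i j) (Set.Icc 0 t) :=
      fun x hx => ((key x hx.1 i j).continuousAt).continuousWithinAt
    have hderiv : ∀ x ∈ Set.Ico 0 t, HasDerivWithinAt
        (fun τ => ((W (l+1) τ)ᵀ * W (l+1) τ - W l τ * (W l τ)ᵀ) i j) 0 (Set.Ici x) x := by
      intro x hx
      simpa using (key x hx.1 i j).hasDerivWithinAt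
    exact constant_of_has_deriv_right_zero hcont hderiv t (Set.right_mem_Icc.mpr ht)
  have h0 : (W (l+1) t)ᵀ * W (l+1) t - W l t * (W l t)ᵀ = 0 := by
    ext i j
    rw [Matrix.zero_apply, hsub i j, hbal l hl]
    simp
  rw [← sub_eq_zero]
  exact h0

end Main


section Alg
variable {L : ℕ} {G : Matrix (Fin d) (Fin d) ℝ → Matrix (Fin d) (Fin d) ℝ}
  {W : ℕ → ℝ → Matrix (Fin d) (Fin d) ℝ}

lemma pull (A : Matrix (Fin d) (Fin d) ℝ) (m : ℕ) :
    Aᵀ * (A * Aᵀ) ^ m * A = (Aᵀ * A) ^ (m + 1) := by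
  induction m with
  | zero => simp [pow_one]
  | succ m ih =>
    have : Aᵀ * (A * Aᵀ) ^ (m+1) * A = (Aᵀ * (A * Aᵀ) ^ m * A) * (Aᵀ * A) := by
      rw [pow_succ]
      simp only [Matrix.mul_assoc]
    rw [this, ih, ← pow_succ]

lemma pull' (A : Matrix (Fin d) (Fin d) ℝ) (m : ℕ) :
    A * (Aᵀ * A) ^ m * Aᵀ = (A * Aᵀ) ^ (m + 1) := by
  have h := pull Aᵀ m
  simpa using h

lemma sts (t : ℝ)
    (hb : ∀ l, l + 1 < L → (W (l + 1) t)ᵀ * W (l + 1) t = W l t * (W l t)ᵀ) :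
    ∀ m l, l < L → L - (l + 1) = m →
      (prodFrom d L W (l + 1) t)ᵀ * prodFrom d L W (l + 1) t = (W l t * (W l t)ᵀ) ^ m := by
  intro m
  induction m with
  | zero =>
    intro l hl hm
    rw [prodFrom_self W L (l+1) (by omega) t]
    simp
  | succ m ih =>
    intro l hl hm
    have hl1 : l + 1 < L := by omega
    rw [prodFrom_bot W L (l+1) hl1 t, Matrix.transpose_mul]
    have e1 : (W (l+1) t)ᵀ * (prodFrom d L W (l+1+1) t)ᵀ * (prodFrom d L W (l+1+1) t * W (l+1) t)
        = (W (l+1) t)ᵀ * ((prodFrom d L W (l+1+1) t)ᵀ * prodFrom d L W (l+1+1) t) * W (l+1) t := by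
      simp only [Matrix.mul_assoc]
    rw [e1, ih (l+1) hl1 (by omega), pull, hb l hl1]

lemma pts (t : ℝ) (hL : 2 ≤ L)
    (hb : ∀ l, l + 1 < L → (W (l + 1) t)ᵀ * W (l + 1) t = W l t * (W l t)ᵀ) :
    ∀ l m, l + m = L - 2 →
      (prodUpTo d W l t)ᵀ * ((W l t)ᵀ * W l t) ^ m * prodUpTo d W l t
        = ((W 0 t)ᵀ * W 0 t) ^ (L - 2) := by
  intro l
  induction l with
  | zero =>
    intro m hm
    rw [prodUpTo_zero]
    simp only [Matrix.transpose_one, Matrix.one_mul, Matrix.mul_one]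
    rw [Nat.zero_add] at hm
    rw [hm]
  | succ l ih =>
    intro m hm
    have hl1 : l + 1 < L := by omega
    rw [prodUpTo_succ W l t, Matrix.transpose_mul, hb l hl1]
    have e1 : (prodUpTo d W l t)ᵀ * (W l t)ᵀ * (W l t * (W l t)ᵀ) ^ m * (W l t * prodUpTo d W l t)
        = (prodUpTo d W l t)ᵀ * ((W l t)ᵀ * (W l t * (W l t)ᵀ) ^ m * W l t) * prodUpTo d W l t := by
      simp only [Matrix.mul_assoc]
    rw [e1, pull, ih (m+1) (by omega)]

end Alg

noncomputable def Ml (d L : ℕ) (W : ℕ → ℝ → Matrix (Fin d) (Fin d) ℝ) (l : ℕ) (t : ℝ) :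
    Matrix (Fin d) (Fin d) ℝ :=
  (prodUpTo d W l t)ᵀ * (W l t)⁻¹ * (prodFrom d L W (l + 1) t)ᵀ

section Alg2
variable {L : ℕ} {G : Matrix (Fin d) (Fin d) ℝ → Matrix (Fin d) (Fin d) ℝ}
  {W : ℕ → ℝ → Matrix (Fin d) (Fin d) ℝ}

lemma dets (t : ℝ) (l : ℕ) (hl : l < L) (hdet : (prodUpTo d W L t).det ≠ 0) :
    IsUnit (W l t).det ∧ IsUnit (prodUpTo d W l t).det ∧
      IsUnit (prodFrom d L W (l + 1) t).det := by
  have h := split3 W L t l hl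
  have hd : (prodUpTo d W L t).det
      = (prodFrom d L W (l+1) t).det * ((W l t).det * (prodUpTo d W l t).det) := by
    rw [h, Matrix.det_mul, Matrix.det_mul]
  rw [hd] at hdet
  refine ⟨isUnit_iff_ne_zero.mpr ?_, isUnit_iff_ne_zero.mpr ?_, isUnit_iff_ne_zero.mpr ?_⟩
  · intro h0; apply hdet; rw [h0]; ring
  · intro h0; apply hdet; rw [h0]; ring
  · intro h0; apply hdet; rw [h0]; ring

lemma MMT_aux (P S Wl W0 : Matrix (Fin d) (Fin d) ℝ) (m : ℕ)
    (hWu : IsUnit Wl.det)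
    (hs : Sᵀ * S = (Wl * Wlᵀ) ^ (m + 1))
    (hp : Pᵀ * (Wlᵀ * Wl) ^ m * P = W0) :
    (Pᵀ * Wl⁻¹ * Sᵀ) * (Pᵀ * Wl⁻¹ * Sᵀ)ᵀ = W0 := by
  have hWTu : IsUnit (Wlᵀ).det := by rwa [Matrix.det_transpose]
  have hMT : (Pᵀ * Wl⁻¹ * Sᵀ)ᵀ = S * Wl⁻¹ᵀ * P := by
    simp [Matrix.transpose_mul, Matrix.mul_assoc]
  have hM : (Pᵀ * Wl⁻¹ * Sᵀ) * (Pᵀ * Wl⁻¹ * Sᵀ)ᵀ = Pᵀ * (Wl⁻¹ * ((Sᵀ * S) * Wl⁻¹ᵀ)) * P := by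
    rw [hMT]
    simp only [Matrix.mul_assoc]
  rw [hM, hs, ← pull' Wl m]
  have e : Wl⁻¹ * (Wl * (Wlᵀ * Wl) ^ m * Wlᵀ * Wl⁻¹ᵀ) = (Wlᵀ * Wl) ^ m := by
    rw [Matrix.transpose_nonsing_inv]
    simp only [Matrix.mul_assoc]
    rw [Matrix.nonsing_inv_mul_cancel_left _ _ hWu]
    rw [Matrix.mul_nonsing_inv _ hWTu, Matrix.mul_one]
  rw [e, hp]

lemma MMT (hL : 2 ≤ L) (t : ℝ)
    (hb : ∀ l, l + 1 < L → (W (l + 1) t)ᵀ * W (l + 1) t = W l t * (W l t)ᵀ)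
    (hdet : (prodUpTo d W L t).det ≠ 0) (l : ℕ) (hl : l < L) :
    Ml d L W l t * (Ml d L W l t)ᵀ = ((W 0 t)ᵀ * W 0 t) ^ (L - 2) := by
  obtain ⟨hWu, hPu, hSu⟩ := dets t l hl hdet
  by_cases hcase : l + 1 < L
  · refine MMT_aux _ _ _ _ (L - (l + 2)) hWu ?_ ?_
    · have hs := sts (W := W) t hb (L - (l + 1)) l hl rfl
      rwa [show L - (l+1) = (L - (l+2)) + 1 by omega] at hs
    · exact pts (W := W) t hL hb l (L - (l+2)) (by omega)
  · obtain ⟨k, hk1, hk2⟩ : ∃ k, l = k + 1 ∧ k + 1 + 1 = L := ⟨l - 1, by omega, by omega⟩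
    subst hk1
    obtain ⟨hWku, hPku, _⟩ := dets (W := W) t k (by omega) hdet
    have hWtku : IsUnit ((W k t)ᵀ).det := by rwa [Matrix.det_transpose]
    have hS1 : prodFrom d L W (k + 1 + 1) t = 1 := prodFrom_self W L (k+1+1) (by omega) t
    have hbk := hb k (by omega)
    have hM2 : Ml d L W (k+1) t * (Ml d L W (k+1) t)ᵀ
        = (prodUpTo d W (k+1) t)ᵀ * ((W (k+1) t)⁻¹ * (W (k+1) t)⁻¹ᵀ) * prodUpTo d W (k+1) t := by
      unfold Ml
      rw [hS1]
      simp only [Matrix.transpose_one, Matrix.mul_one, Matrix.transpose_mul,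
        Matrix.transpose_transpose]
      simp only [Matrix.mul_assoc]
    have hinv : (W (k+1) t)⁻¹ * (W (k+1) t)⁻¹ᵀ = ((W (k+1) t)ᵀ * W (k+1) t)⁻¹ := by
      rw [Matrix.mul_inv_rev, Matrix.transpose_nonsing_inv]
    have hP : prodUpTo d W (k+1) t = W k t * prodUpTo d W k t := prodUpTo_succ W k t
    rw [hM2, hinv, hbk, hP, Matrix.transpose_mul, Matrix.mul_inv_rev]
    have hmid : (W k t)ᵀ * (((W k t)ᵀ⁻¹ * (W k t)⁻¹) * W k t) = 1 := by
      rw [← Matrix.mul_assoc, ← Matrix.mul_assoc, Matrix.mul_nonsing_inv _ hWtku,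
        Matrix.one_mul, Matrix.nonsing_inv_mul _ hWku]
    have e3 : (prodUpTo d W k t)ᵀ * (W k t)ᵀ * ((W k t)ᵀ⁻¹ * (W k t)⁻¹) * (W k t * prodUpTo d W k t)
        = (prodUpTo d W k t)ᵀ * ((W k t)ᵀ * (((W k t)ᵀ⁻¹ * (W k t)⁻¹) * W k t)) * prodUpTo d W k t := by
      simp only [Matrix.mul_assoc]
    rw [e3, hmid, Matrix.mul_one]
    have := pts (W := W) t hL hb k 0 (by omega)
    simpa using this

end Alg2

section Alg3
variable {L : ℕ} {G : Matrix (Fin d) (Fin d) ℝ → Matrix (Fin d) (Fin d) ℝ}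
  {W : ℕ → ℝ → Matrix (Fin d) (Fin d) ℝ}

lemma trace_term (t : ℝ) (l : ℕ) (hl : l < L) (hdet : (prodUpTo d W L t).det ≠ 0) :
    Matrix.trace ((prodUpTo d W L t)⁻¹ *
        (prodFrom d L W (l + 1) t * Vl d L G W l t * prodUpTo d W l t))
      = -Matrix.trace (Ml d L W l t * G (prodUpTo d W L t)) := by
  obtain ⟨hWu, hPu, hSu⟩ := dets t l hl hdet
  have hA := split3 W L t l hl
  have hAinv : (prodUpTo d W L t)⁻¹
      = (prodUpTo d W l t)⁻¹ * (W l t)⁻¹ * (prodFrom d L W (l+1) t)⁻¹ := by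
    rw [hA, Matrix.mul_inv_rev, Matrix.mul_inv_rev]
  rw [hAinv]
  unfold Vl Ml
  simp only [Matrix.mul_neg, Matrix.neg_mul, Matrix.trace_neg, neg_inj]
  simp only [Matrix.mul_assoc]
  rw [Matrix.nonsing_inv_mul_cancel_left _ _ hSu]
  rw [Matrix.trace_mul_comm ((prodUpTo d W l t)⁻¹)]
  simp only [Matrix.mul_assoc]
  rw [Matrix.mul_nonsing_inv _ hPu, Matrix.mul_one]
  conv_rhs => rw [Matrix.trace_mul_comm]
  simp only [Matrix.mul_assoc]

lemma trace_DA (t : ℝ) (hdet : (prodUpTo d W L t).det ≠ 0) :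
    Matrix.trace ((prodUpTo d W L t).adjugate * DA d L G W t)
      = (prodUpTo d W L t).det *
          (-∑ l ∈ Finset.range L, Matrix.trace (Ml d L W l t * G (prodUpTo d W L t))) := by
  have hadj : (prodUpTo d W L t).adjugate
      = (prodUpTo d W L t).det • (prodUpTo d W L t)⁻¹ := by
    have hu := isUnit_iff_ne_zero.mpr hdet
    have hma := Matrix.mul_adjugate (prodUpTo d W L t)
    calc (prodUpTo d W L t).adjugate
        = (prodUpTo d W L t)⁻¹ * (prodUpTo d W L t) * (prodUpTo d W L t).adjugate := by
          rw [Matrix.nonsing_inv_mul _ hu, Matrix.one_mul]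
      _ = (prodUpTo d W L t)⁻¹ * ((prodUpTo d W L t) * (prodUpTo d W L t).adjugate) := by
          rw [Matrix.mul_assoc]
      _ = (prodUpTo d W L t)⁻¹ * ((prodUpTo d W L t).det • 1) := by rw [hma]
      _ = (prodUpTo d W L t).det • (prodUpTo d W L t)⁻¹ := by
          rw [Matrix.mul_smul, Matrix.mul_one]
  rw [hadj, Matrix.smul_mul, Matrix.trace_smul, smul_eq_mul]
  congr 1
  unfold DA
  rw [Finset.mul_sum, Matrix.trace_sum, ← Finset.sum_neg_distrib]
  refine Finset.sum_congr rfl fun l hl => ?_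
  exact trace_term t l (Finset.mem_range.mp hl) hdet

lemma trace_CS (M B : Matrix (Fin d) (Fin d) ℝ) :
    |Matrix.trace (M * B)| ≤
      Real.sqrt (Matrix.trace (M * Mᵀ)) * Real.sqrt (Matrix.trace (B * Bᵀ)) := by
  have h0 : Matrix.trace (M * B) = ∑ p : Fin d × Fin d, M p.1 p.2 * B p.2 p.1 := by
    rw [Fintype.sum_prod_type]
    simp [Matrix.trace, Matrix.diag, Matrix.mul_apply]
  have h1 : Matrix.trace (M * Mᵀ) = ∑ p : Fin d × Fin d, (M p.1 p.2)^2 := by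
    rw [Fintype.sum_prod_type]
    simp [Matrix.trace, Matrix.diag, Matrix.mul_apply, sq]
  have h2 : Matrix.trace (B * Bᵀ) = ∑ p : Fin d × Fin d, (B p.2 p.1)^2 := by
    rw [Fintype.sum_prod_type, Finset.sum_comm]
    simp [Matrix.trace, Matrix.diag, Matrix.mul_apply, sq]
  have h1nonneg : 0 ≤ Matrix.trace (M * Mᵀ) := by rw [h1]; positivity
  have hcs := Finset.sum_mul_sq_le_sq_mul_sq Finset.univ
    (fun p : Fin d × Fin d => M p.1 p.2) (fun p => B p.2 p.1)
  calc |Matrix.trace (M * B)| = Real.sqrt ((Matrix.trace (M * B))^2) :=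
        (Real.sqrt_sq_eq_abs _).symm
    _ ≤ Real.sqrt (Matrix.trace (M * Mᵀ) * Matrix.trace (B * Bᵀ)) := by
        apply Real.sqrt_le_sqrt
        rw [h0, h1, h2]
        exact hcs
    _ = _ := Real.sqrt_mul h1nonneg _

end Alg3

lemma contpow (k : ℕ) : Continuous (fun M : Matrix (Fin d) (Fin d) ℝ => M ^ k) := by
  induction k with
  | zero => simpa [pow_zero] using (continuous_const : Continuous fun _ : Matrix (Fin d) (Fin d) ℝ => (1 : Matrix (Fin d) (Fin d) ℝ))
  | succ k ih => simpa [pow_succ] using ih.matrix_mul continuous_id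

end DetSign

open DetSign in
/-- **The determinant of the product matrix does not change sign.**
Let `ℓ` be a real-analytic loss on `d×d` matrices with gradient `G` (w.r.t. the Frobenius
inner product), and run gradient flow on a depth-`L` factorization (`L ≥ 2`) by square
matrices with balanced initialization.  Then `det(W_{L:1}(t))` is identically zero if
`det(W_{L:1}(0)) = 0`, positive for all `t ≥ 0` if `det(W_{L:1}(0)) > 0`, and negative
for all `t ≥ 0` if `det(W_{L:1}(0)) < 0`. -/
theorem det_sign_constant_deep_factorization
    (d L : ℕ) (hL : 2 ≤ L)
    (ℓ : Matrix (Fin d) (Fin d) ℝ → ℝ)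
    (hanalytic : ∀ v : Fin d → Fin d → ℝ,
      AnalyticAt ℝ (fun u : Fin d → Fin d → ℝ => ℓ (Matrix.of u)) v)
    (G : Matrix (Fin d) (Fin d) ℝ → Matrix (Fin d) (Fin d) ℝ)
    (hG : ∀ X H : Matrix (Fin d) (Fin d) ℝ,
      HasDerivAt (fun s : ℝ => ℓ (X + s • H)) (∑ i, ∑ j, G X i j * H i j) 0)
    (W : ℕ → ℝ → Matrix (Fin d) (Fin d) ℝ)
    (hGF : ∀ l, l < L → ∀ t : ℝ, 0 ≤ t → ∀ i j,
      HasDerivAt (fun s => W l s i j)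
        ((-((prodFrom d L W (l + 1) t)ᵀ * G (prodUpTo d W L t) *
            (prodUpTo d W l t)ᵀ)) i j) t)
    (hbal : ∀ l, l + 1 < L → (W (l + 1) 0)ᵀ * W (l + 1) 0 = W l 0 * (W l 0)ᵀ) :
    ((prodUpTo d W L 0).det = 0 → ∀ t : ℝ, 0 ≤ t → (prodUpTo d W L t).det = 0) ∧
    (0 < (prodUpTo d W L 0).det → ∀ t : ℝ, 0 ≤ t → 0 < (prodUpTo d W L t).det) ∧
    ((prodUpTo d W L 0).det < 0 → ∀ t : ℝ, 0 ≤ t → (prodUpTo d W L t).det < 0) := by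
  classical
  have hGF' : ∀ l, l < L → ∀ t : ℝ, 0 ≤ t → HD (W l) (Vl d L G W l t) t :=
    fun l hl t ht i j => hGF l hl t ht i j
  obtain ⟨g, hgc, hgG⟩ := grad_eq_fderiv ℓ hanalytic G hG
  set D : ℝ → ℝ := fun t => (prodUpTo d W L t).det with hDdef
  have hbalt := balance_all (W := W) (G := G) hGF' hbal
  have hDder : ∀ t : ℝ, 0 ≤ t → HasDerivAt D
      (Matrix.trace ((prodUpTo d W L t).adjugate * DA d L G W t)) t := by
    intro t ht
    have h := (HD_prodUpTo (W := W) (G := G) hGF' t ht L le_rfl).det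
    exact h
  have hDcont : ∀ t : ℝ, 0 ≤ t → ContinuousAt D t := fun t ht => (hDder t ht).continuousAt
  -- the continuous bound function
  set c : ℝ → ℝ := fun t => (L : ℝ) *
      (Real.sqrt (Matrix.trace (((W 0 t)ᵀ * W 0 t) ^ (L - 2))) *
       Real.sqrt (Matrix.trace (G (prodUpTo d W L t) * (G (prodUpTo d W L t))ᵀ))) with hcdef
  -- continuity of c on [0,∞)
  have hWcont : ∀ t : ℝ, 0 ≤ t → ContinuousAt (fun s => W 0 s) t := by
    intro t ht
    exact continuousAt_pi.2 fun i => continuousAt_pi.2 fun j =>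
      (hGF' 0 (by omega) t ht i j).continuousAt
  have hAcont : ∀ t : ℝ, 0 ≤ t → ContinuousAt (fun s => prodUpTo d W L s) t := by
    intro t ht
    exact continuousAt_pi.2 fun i => continuousAt_pi.2 fun j =>
      (HD_prodUpTo (W := W) (G := G) hGF' t ht L le_rfl i j).continuousAt
  have hccont : ∀ t : ℝ, 0 ≤ t → ContinuousAt c t := by
    intro t ht
    have hF1 : Continuous (fun M : Matrix (Fin d) (Fin d) ℝ =>
        Matrix.trace ((Mᵀ * M) ^ (L - 2))) :=
      ((contpow (L-2)).comp ((continuous_id.matrix_transpose).matrix_mul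
        continuous_id)).matrix_trace
    have hF2 : Continuous (fun M : Matrix (Fin d) (Fin d) ℝ =>
        Matrix.trace (g (Matrix.of.symm M) * (g (Matrix.of.symm M))ᵀ)) := by
      have hg' : Continuous (fun M : Matrix (Fin d) (Fin d) ℝ => g (Matrix.of.symm M)) := by
        exact hgc.comp (continuous_pi fun i => continuous_pi fun j =>
          ((continuous_apply j).comp (continuous_apply i)))
      exact (hg'.matrix_mul hg'.matrix_transpose).matrix_trace
    have hGg : (fun s => Matrix.trace
          (G (prodUpTo d W L s) * (G (prodUpTo d W L s))ᵀ))
        = fun s => Matrix.trace (g (Matrix.of.symm (prodUpTo d W L s)) *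
            (g (Matrix.of.symm (prodUpTo d W L s)))ᵀ) := by
      funext s
      rw [hgG (prodUpTo d W L s)]
    refine ContinuousAt.mul continuousAt_const (ContinuousAt.mul ?_ ?_)
    · exact (Real.continuous_sqrt.continuousAt).comp
        ((hF1.continuousAt).comp (hWcont t ht))
    · refine (Real.continuous_sqrt.continuousAt).comp ?_
      have : ContinuousAt (fun s => Matrix.trace (g (Matrix.of.symm (prodUpTo d W L s)) *
          (g (Matrix.of.symm (prodUpTo d W L s)))ᵀ)) t :=
        (hF2.continuousAt).comp (hAcont t ht)
      rw [hGg]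
      exact this
  -- the log-derivative with bound
  have hEd : ∀ t : ℝ, 0 ≤ t → D t ≠ 0 →
      HasDerivAt (fun s => Real.log (D s))
        ((D t)⁻¹ * Matrix.trace ((prodUpTo d W L t).adjugate * DA d L G W t)) t ∧
      |(D t)⁻¹ * Matrix.trace ((prodUpTo d W L t).adjugate * DA d L G W t)| ≤ c t := by
    intro t ht hne
    constructor
    · have hlog := Real.hasDerivAt_log hne
      have h := hlog.comp t (hDder t ht)
      exact h
    · have hb := hbalt t ht
      have htr := trace_DA (G := G) (W := W) t hne
      rw [htr, inv_mul_cancel_left₀ hne, abs_neg]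
      calc |∑ l ∈ Finset.range L, Matrix.trace (Ml d L W l t * G (prodUpTo d W L t))|
          ≤ ∑ l ∈ Finset.range L, |Matrix.trace (Ml d L W l t * G (prodUpTo d W L t))| :=
            Finset.abs_sum_le_sum_abs _ _
        _ ≤ ∑ _l ∈ Finset.range L,
              Real.sqrt (Matrix.trace (((W 0 t)ᵀ * W 0 t) ^ (L - 2))) *
              Real.sqrt (Matrix.trace (G (prodUpTo d W L t) * (G (prodUpTo d W L t))ᵀ)) := by
            refine Finset.sum_le_sum fun l hl => ?_
            have h := trace_CS (Ml d L W l t) (G (prodUpTo d W L t))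
            rwa [MMT hL t hb hne l (Finset.mem_range.mp hl)] at h
        _ = c t := by
            rw [Finset.sum_const, Finset.card_range, nsmul_eq_mul]
  -- no-crossing lemma
  have nocross : ∀ a b : ℝ, 0 ≤ a → a < b → (∀ x, x ∈ Set.Ioo a b → D x ≠ 0) →
      (D a = 0 ∨ D b = 0) → False := by
    intro a b ha hab hne hz
    obtain ⟨C0, hC0⟩ := IsCompact.exists_bound_of_continuousOn (isCompact_Icc (a := a) (b := b))
      (fun x hx => (hccont x (le_trans ha hx.1)).continuousWithinAt)
    set C : ℝ := max C0 0 with hCdef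
    have hCnn : 0 ≤ C := le_max_right _ _
    have hC : ∀ x ∈ Set.Icc a b, c x ≤ C := by
      intro x hx
      exact le_trans (le_trans (le_abs_self _) (by simpa [Real.norm_eq_abs] using hC0 x hx))
        (le_max_left _ _)
    set m : ℝ := (a + b) / 2 with hmdef
    have ham : a < m := by rw [hmdef]; linarith
    have hmb : m < b := by rw [hmdef]; linarith
    have hvar : ∀ u v : ℝ, a < u → u ≤ v → v < b →
        |Real.log (D v) - Real.log (D u)| ≤ C * (v - u) := by
      intro u v hu huv hvb
      have hsub : Set.Icc u v ⊆ Set.Ioo a b :=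
        fun x hx => ⟨lt_of_lt_of_le hu hx.1, lt_of_le_of_lt hx.2 hvb⟩
      have hder : ∀ x ∈ Set.Icc u v, HasDerivWithinAt (fun s => Real.log (D s))
          ((D x)⁻¹ * Matrix.trace ((prodUpTo d W L x).adjugate * DA d L G W x))
          (Set.Icc u v) x := by
        intro x hx
        exact ((hEd x (le_trans ha (le_of_lt (hsub hx).1)) (hne x (hsub hx))).1).hasDerivWithinAt
      have hbound : ∀ x ∈ Set.Ico u v,
          ‖(D x)⁻¹ * Matrix.trace ((prodUpTo d W L x).adjugate * DA d L G W x)‖ ≤ C := by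
        intro x hx
        have hx' : x ∈ Set.Ioo a b := hsub ⟨hx.1, le_of_lt hx.2⟩
        have h1 := (hEd x (le_trans ha (le_of_lt hx'.1)) (hne x hx')).2
        have h2 := hC x ⟨le_of_lt hx'.1, le_of_lt hx'.2⟩
        rw [Real.norm_eq_abs]
        exact le_trans h1 h2
      have h := norm_image_sub_le_of_norm_deriv_le_segment' hder hbound v
        (Set.right_mem_Icc.mpr huv)
      simpa [Real.norm_eq_abs] using h
    rcases hz with hza | hzb
    · have hmne : D m ≠ 0 := hne m ⟨ham, hmb⟩
      set ε : ℝ := Real.exp (Real.log (D m) - C * (m - a)) with hεdef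
      have heps : ∀ u, a < u → u ≤ m → ε ≤ |D u| := by
        intro u hu hum
        have h1 := hvar u m hu hum hmb
        have h2 : Real.log (D m) - C * (m - a) ≤ Real.log (D u) := by
          have h3 := (abs_le.mp h1).2
          nlinarith [mul_le_mul_of_nonneg_left (by linarith : m - u ≤ m - a) hCnn]
        calc ε ≤ Real.exp (Real.log (D u)) := Real.exp_le_exp.mpr h2
          _ = |D u| := Real.exp_log_eq_abs (hne u ⟨hu, lt_of_le_of_lt hum hmb⟩)
      have htend : Filter.Tendsto (fun u => |D u|) (nhdsWithin a (Set.Ioi a)) (nhds |D a|) :=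
        ((hDcont a ha).abs.tendsto).mono_left nhdsWithin_le_nhds
      have hev : ∀ᶠ u in nhdsWithin a (Set.Ioi a), ε ≤ |D u| := by
        filter_upwards [Ioc_mem_nhdsGT_of_mem (Set.mem_Ico.mpr ⟨le_rfl, ham⟩)] with u hu
        exact heps u hu.1 hu.2
      have hfin := ge_of_tendsto htend hev
      rw [hza, abs_zero] at hfin
      exact absurd hfin (not_le.mpr (Real.exp_pos _))
    · have hmne : D m ≠ 0 := hne m ⟨ham, hmb⟩
      set ε : ℝ := Real.exp (Real.log (D m) - C * (b - m)) with hεdef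
      have heps : ∀ u, m ≤ u → u < b → ε ≤ |D u| := by
        intro u hum hub
        have h1 := hvar m u ham hum hub
        have h2 : Real.log (D m) - C * (b - m) ≤ Real.log (D u) := by
          have h3 := (abs_le.mp h1).1
          nlinarith [mul_le_mul_of_nonneg_left (by linarith : u - m ≤ b - m) hCnn]
        calc ε ≤ Real.exp (Real.log (D u)) := Real.exp_le_exp.mpr h2
          _ = |D u| := Real.exp_log_eq_abs (hne u ⟨lt_of_lt_of_le ham hum, hub⟩)
      have htend : Filter.Tendsto (fun u => |D u|) (nhdsWithin b (Set.Iio b)) (nhds |D b|) :=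
        ((hDcont b (le_trans ha (le_of_lt hab))).abs.tendsto).mono_left nhdsWithin_le_nhds
      have hev : ∀ᶠ u in nhdsWithin b (Set.Iio b), ε ≤ |D u| := by
        filter_upwards [Ico_mem_nhdsLT_of_mem (Set.mem_Ioc.mpr ⟨hmb, le_rfl⟩)] with u hu
        exact heps u hu.1 hu.2
      have hfin := ge_of_tendsto htend hev
      rw [hzb, abs_zero] at hfin
      exact absurd hfin (not_le.mpr (Real.exp_pos _))
  -- continuity trick for closedness
  have hDon : ContinuousOn D (Set.Ici (0:ℝ)) := fun x hx => (hDcont x hx).continuousWithinAt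
  have hDext : Continuous (fun t : ℝ => D (max t 0)) :=
    hDon.comp_continuous (continuous_id.max continuous_const) (fun x => le_max_right x 0)
  -- the key sign-preservation
  have key : ∀ p q : ℝ, 0 ≤ p → 0 ≤ q → D p = 0 → D q ≠ 0 → False := by
    intro p q hp hq hzp hzq
    rcases lt_trichotomy p q with h | h | h
    · set Z : Set ℝ := Set.Icc p q ∩ (fun t => D (max t 0)) ⁻¹' {0} with hZdef
      have hZx : ∀ x ∈ Set.Icc p q, (x ∈ Z ↔ D x = 0) := by
        intro x hx
        have hx0 : max x 0 = x := max_eq_left (le_trans hp hx.1)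
        simp [hZdef, hx, hx0]
      have hZne : Z.Nonempty := ⟨p, (hZx p ⟨le_rfl, le_of_lt h⟩).mpr hzp⟩
      have hZbdd : BddAbove Z := ⟨q, fun x hx => hx.1.2⟩
      have hZclosed : IsClosed Z := isClosed_Icc.inter (isClosed_singleton.preimage hDext)
      set x0 := sSup Z with hx0def
      have hx0 : x0 ∈ Z := hZclosed.csSup_mem hZne hZbdd
      have hx0Icc : x0 ∈ Set.Icc p q := hx0.1
      have hx0z : D x0 = 0 := (hZx x0 hx0Icc).mp hx0
      have hx0q : x0 < q := lt_of_le_of_ne hx0Icc.2 (fun h' => hzq (h' ▸ hx0z))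
      refine nocross x0 q (le_trans hp hx0Icc.1) hx0q ?_ (Or.inl hx0z)
      intro x hx hDx
      have hxZ : x ∈ Z := (hZx x ⟨le_trans hx0Icc.1 (le_of_lt hx.1), le_of_lt hx.2⟩).mpr hDx
      exact absurd (le_csSup hZbdd hxZ) (not_le.mpr hx.1)
    · exact hzq (h ▸ hzp)
    · set Z : Set ℝ := Set.Icc q p ∩ (fun t => D (max t 0)) ⁻¹' {0} with hZdef
      have hZx : ∀ x ∈ Set.Icc q p, (x ∈ Z ↔ D x = 0) := by
        intro x hx
        have hx0 : max x 0 = x := max_eq_left (le_trans hq hx.1)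
        simp [hZdef, hx, hx0]
      have hZne : Z.Nonempty := ⟨p, (hZx p ⟨le_of_lt h, le_rfl⟩).mpr hzp⟩
      have hZbdd : BddBelow Z := ⟨q, fun x hx => hx.1.1⟩
      have hZclosed : IsClosed Z := isClosed_Icc.inter (isClosed_singleton.preimage hDext)
      set x0 := sInf Z with hx0def
      have hx0 : x0 ∈ Z := hZclosed.csInf_mem hZne hZbdd
      have hx0Icc : x0 ∈ Set.Icc q p := hx0.1
      have hx0z : D x0 = 0 := (hZx x0 hx0Icc).mp hx0
      have hqx0 : q < x0 := lt_of_le_of_ne hx0Icc.1 (fun h' => hzq (h' ▸ hx0z))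
      refine nocross q x0 hq hqx0 ?_ (Or.inr hx0z)
      intro x hx hDx
      have hxZ : x ∈ Z := (hZx x ⟨le_of_lt hx.1, le_trans (le_of_lt hx.2) hx0Icc.2⟩).mpr hDx
      exact absurd (csInf_le hZbdd hxZ) (not_le.mpr hx.2)
  -- conclusion
  refine ⟨?_, ?_, ?_⟩
  · intro h0 t ht
    by_contra hne
    exact key 0 t le_rfl ht h0 hne
  · intro h0 t ht
    rcases lt_trichotomy (D t) 0 with hneg | hzero | hpos
    · have hD0 : ContinuousOn D (Set.Icc 0 t) ∨ True := Or.inr trivial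
      have hcont : ContinuousOn D (Set.Icc 0 t) :=
        fun x hx => (hDcont x hx.1).continuousWithinAt
      obtain ⟨s, hs, hsz⟩ := intermediate_value_Icc' ht hcont
        (Set.mem_Icc.mpr ⟨le_of_lt hneg, le_of_lt h0⟩)
      exact absurd (key s 0 hs.1 le_rfl hsz (ne_of_gt h0)) (by simp)
    · exact absurd (key t 0 ht le_rfl hzero (ne_of_gt h0)) (by simp)
    · exact hpos
  · intro h0 t ht
    rcases lt_trichotomy (D t) 0 with hneg | hzero | hpos
    · exact hneg
    · exact absurd (key t 0 ht le_rfl hzero (ne_of_lt h0)) (by simp)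
    · have hcont : ContinuousOn D (Set.Icc 0 t) :=
        fun x hx => (hDcont x hx.1).continuousWithinAt
      obtain ⟨s, hs, hsz⟩ := intermediate_value_Icc ht hcont
        (Set.mem_Icc.mpr ⟨le_of_lt h0, le_of_lt hpos⟩)
      exact absurd (key s 0 hs.1 le_rfl hsz (ne_of_lt h0)) (by simp)
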